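/- Let (V, g, J) be an ε-Hermitian vector space and θ a 1-form with θ and θ∘J linearly independent. Suppose α = λ ⊗ θ + μ ⊗ (θ∘J) for 1-forms λ, μ, and additionally α is symmetric and of type (1,1), i.e., α(JX, JY) = -ε α(X, Y). Then λ = f θ and μ = -ε f (θ∘J) for some scalar f, so that α = f(θ ⊗ θ - ε(θ∘J) ⊗ (θ∘J)). -/

import Mathlib

/-- If `α = λ ⊗ θ + μ ⊗ (θ∘J)` is moreover symmetric and of type (1,1)
(`α(JX,JY) = -ε α(X,Y)`), and `θ, θ∘J` are linearly independent, then `λ = f θ` and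
`μ = -ε f (θ∘J)` for some scalar `f`, so that
`α = f (θ ⊗ θ - ε (θ∘J) ⊗ (θ∘J))`. -/
theorem stmt4 (V : Type*) [AddCommGroup V] [Module ℝ V] [FiniteDimensional ℝ V]
    (ε : ℝ) (hε : ε = 1 ∨ ε = -1)
    (g : LinearMap.BilinForm ℝ V)
    (hsymm : ∀ x y : V, g x y = g y x)
    (hnd : ∀ x : V, (∀ y : V, g x y = 0) → x = 0)
    (J : V →ₗ[ℝ] V) (hJ2 : ∀ x : V, J (J x) = ε • x)
    (hskew : ∀ x y : V, g (J x) y + g x (J y) = 0)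
    (θ : V →ₗ[ℝ] ℝ)
    (hLI : ∀ a b : ℝ, (∀ x : V, a * θ x + b * θ (J x) = 0) → a = 0 ∧ b = 0)
    (lam mu : V →ₗ[ℝ] ℝ)
    (α : V → V → ℝ)
    (hα : ∀ X Y : V, α X Y = lam X * θ Y + mu X * θ (J Y))
    (hsymα : ∀ X Y : V, α X Y = α Y X)
    (h11 : ∀ X Y : V, α (J X) (J Y) = -ε * α X Y) :
    ∃ f : ℝ, (∀ X : V, lam X = f * θ X) ∧ (∀ X : V, mu X = -ε * f * θ (J X)) ∧
      ∀ X Y : V, α X Y = f * (θ X * θ Y - ε * (θ (J X) * θ (J Y))) := by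

  have hε2 : ε * ε = 1 := by rcases hε with h | h <;> simp [h]
  -- key: mu X = -ε * lam (J X)
  have hmu : ∀ X : V, mu X = -ε * lam (J X) := by
    intro X
    have key := hLI (ε * mu (J X) + ε * lam X) (lam (J X) + ε * mu X) ?_
    · have hb := key.2
      linear_combination ε * hb - mu X * hε2
    · intro Y
      have h1 := h11 X Y
      rw [hα, hα] at h1
      have hJJ : θ (J (J Y)) = ε * θ Y := by rw [hJ2]; simp
      linear_combination h1 - mu (J X) * hJJ
  -- θ ∘ J ≠ 0
  obtain ⟨z, hz⟩ : ∃ z, θ (J z) ≠ 0 := by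
    by_contra hc
    push_neg at hc
    have := hLI 0 1 (fun x => by simp [hc x])
    exact one_ne_zero this.2
  -- existence of y0 with θ(J y0) = 0 and θ y0 ≠ 0
  obtain ⟨y0, hy0J, hy0⟩ : ∃ y, θ (J y) = 0 ∧ θ y ≠ 0 := by
    by_contra hc
    push_neg at hc
    have hx : ∀ x : V, 1 * θ x + (-(θ z / θ (J z))) * θ (J x) = 0 := by
      intro x
      have hw : θ (J (x - (θ (J x) / θ (J z)) • z)) = 0 := by
        simp only [map_sub, map_smul, smul_eq_mul]
        field_simp
        ring
      have h2 := hc _ hw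
      simp only [map_sub, map_smul, smul_eq_mul] at h2
      field_simp at h2 ⊢
      linarith
    exact one_ne_zero (hLI 1 _ hx).1
  set f : ℝ := lam y0 / θ y0 with hf
  set h : ℝ := mu y0 / θ y0 with hh
  have hfmul : f * θ y0 = lam y0 := div_mul_cancel₀ _ hy0
  have hhmul : h * θ y0 = mu y0 := div_mul_cancel₀ _ hy0
  have hlam : ∀ X : V, lam X = f * θ X + h * θ (J X) := by
    intro X
    have hs := hsymα X y0
    rw [hα, hα, hy0J] at hs
    have := mul_right_cancel₀ hy0 (show lam X * θ y0 = (f * θ X + h * θ (J X)) * θ y0 by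
      linear_combination hs - θ X * hfmul - θ (J X) * hhmul)
    exact this
  have hJJ0 : θ (J (J y0)) = ε * θ y0 := by rw [hJ2]; simp
  have hh0 : h = 0 := by
    have hlamJ : lam (J y0) = h * (ε * θ y0) := by
      rw [hlam (J y0), hy0J, hJJ0]; ring
    have e : h * θ y0 + h * θ y0 = 0 := by
      linear_combination hhmul + hmu y0 - ε * hlamJ - h * θ y0 * hε2
    have : h * θ y0 = 0 := by linarith
    rcases mul_eq_zero.mp this with h0 | h0
    · exact h0
    · exact absurd h0 hy0
  refine ⟨f, ?_, ?_, ?_⟩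
  · intro X
    have := hlam X
    rw [hh0] at this
    linarith
  · intro X
    have h1 := hmu X
    have h2 := hlam (J X)
    rw [hh0] at h2
    rw [h1, h2]; ring
  · intro X Y
    rw [hα]
    have h1 := hlam X
    have h2 := hmu X
    have h3 := hlam (J X)
    rw [hh0] at h1 h3
    rw [h1, h2, h3]
    ring
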